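/- Let f : 𝕋 → 𝕋 and h : 𝕋×𝕋 → ℝ be continuous. If (μ_n) is a sequence of Borel probability measures on 𝕋 converging weakly to a Borel probability measure μ, then (f_{μ_n})_* μ_n converges weakly to (f_μ)_* μ. In particular, the self-consistent transfer operator T is continuous on the space of Borel probability measures on 𝕋 equipped with the weak topology. -/
import Mathlib


open MeasureTheory

/-- Given `f : 𝕋 → 𝕋`, `h : 𝕋×𝕋 → ℝ` and a measure `μ` on `𝕋`, the mean-field coupled map
`f_μ(x) = f(x) + (∫ h(x,y) dμ(y) mod 1)`. -/
noncomputable def fMu (f : UnitAddCircle → UnitAddCircle) (h : UnitAddCircle → UnitAddCircle → ℝ)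
    (μ : Measure UnitAddCircle) : UnitAddCircle → UnitAddCircle :=
  fun x => f x + (↑(∫ y, h x y ∂μ) : UnitAddCircle)

open Filter Topology

namespace Stmt19Aux

/-- Continuous real functions on `UnitAddCircle` are integrable w.r.t. finite measures. -/
lemma integrable_of_cont {g : UnitAddCircle → ℝ} (hg : Continuous g)
    (ν : Measure UnitAddCircle) [IsFiniteMeasure ν] : Integrable g ν :=
  hg.integrable_of_hasCompactSupport (isClosed_tsupport g).isCompact

/-- The norm of a coercion `ℝ → UnitAddCircle` is at most the absolute value. -/
lemma norm_coe_le (x : ℝ) : ‖(x : UnitAddCircle)‖ ≤ |x| := by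
  rw [UnitAddCircle.norm_eq]
  simpa using round_le x 0

/-- Uniform (in the probability measure) modulus of continuity for `x ↦ ∫ h x y dν(y)`. -/
lemma key {h : UnitAddCircle → UnitAddCircle → ℝ} (hh : Continuous (Function.uncurry h))
    {ε : ℝ} (hε : 0 < ε) :
    ∃ δ > 0, ∀ x x' : UnitAddCircle, dist x x' < δ →
      ∀ ν : Measure UnitAddCircle, IsProbabilityMeasure ν →
        |(∫ y, h x y ∂ν) - ∫ y, h x' y ∂ν| ≤ ε := by
  have hu := CompactSpace.uniformContinuous_of_continuous hh
  obtain ⟨δ, hδ, hδ'⟩ := Metric.uniformContinuous_iff.mp hu ε hε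
  refine ⟨δ, hδ, fun x x' hxx' ν hν => ?_⟩
  have hcx : Continuous (h x) := hh.comp (continuous_const.prodMk continuous_id)
  have hcx' : Continuous (h x') := hh.comp (continuous_const.prodMk continuous_id)
  have hix : Integrable (h x) ν := integrable_of_cont hcx ν
  have hix' : Integrable (h x') ν := integrable_of_cont hcx' ν
  rw [← integral_sub hix hix']
  have hb : ∀ᵐ y ∂ν, ‖h x y - h x' y‖ ≤ ε := by
    refine Filter.Eventually.of_forall fun y => ?_
    have : dist ((x, y) : UnitAddCircle × UnitAddCircle) (x', y) < δ := by
      rw [Prod.dist_eq]; simp only [dist_self]; exact max_lt hxx' hδ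
    have := hδ' this
    rw [Real.dist_eq] at this
    exact le_of_lt (by simpa [Function.uncurry] using this)
  calc |∫ y, h x y - h x' y ∂ν| ≤ ε * (ν Set.univ).toReal :=
        norm_integral_le_of_norm_le_const hb
    _ = ε := by simp [hν.measure_univ]

end Stmt19Aux

/-- The self-consistent transfer operator `T μ = (f_μ)_* μ` is continuous with respect to the
weak topology on Borel probability measures: if `μₙ → μ` weakly, then
`(f_{μₙ})_* μₙ → (f_μ)_* μ` weakly. -/
theorem stmt19 (f : UnitAddCircle → UnitAddCircle) (hf : Continuous f)
    (h : UnitAddCircle → UnitAddCircle → ℝ) (hh : Continuous (Function.uncurry h))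
    (μ : Measure UnitAddCircle) [IsProbabilityMeasure μ]
    (μs : ℕ → Measure UnitAddCircle) (hμs : ∀ n, IsProbabilityMeasure (μs n))
    (hconv : ∀ ψ : UnitAddCircle → ℝ, Continuous ψ →
      Filter.Tendsto (fun n : ℕ => ∫ x, ψ x ∂(μs n)) Filter.atTop (nhds (∫ x, ψ x ∂μ))) :
    ∀ ψ : UnitAddCircle → ℝ, Continuous ψ →
      Filter.Tendsto (fun n : ℕ => ∫ x, ψ x ∂((μs n).map (fMu f h (μs n))))
        Filter.atTop (nhds (∫ x, ψ x ∂(μ.map (fMu f h μ)))) := by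
  -- The averaged interaction terms
  set H : Measure UnitAddCircle → UnitAddCircle → ℝ :=
    fun ν x => ∫ y, h x y ∂ν with hH
  -- continuity of `H ν` for any probability measure `ν`
  have Hcont : ∀ (ν : Measure UnitAddCircle), IsProbabilityMeasure ν → Continuous (H ν) := by
    intro ν hν
    rw [Metric.continuous_iff]
    intro b ε hε
    obtain ⟨δ, hδ, hδ'⟩ := Stmt19Aux.key hh (half_pos hε)
    refine ⟨δ, hδ, fun a hab => ?_⟩
    have := hδ' a b hab ν hν
    rw [Real.dist_eq]
    exact lt_of_le_of_lt this (half_lt_self hε)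
  -- continuity of the coupled maps
  have fMucont : ∀ (ν : Measure UnitAddCircle), IsProbabilityMeasure ν →
      Continuous (fMu f h ν) := by
    intro ν hν
    exact hf.add ((AddCircle.continuous_mk' 1).comp (Hcont ν hν))
  -- equicontinuity of the family `H (μs n)`
  have eqcont : Equicontinuous (fun n => H (μs n)) := by
    intro x
    rw [Metric.equicontinuousAt_iff]
    intro ε hε
    obtain ⟨δ, hδ, hδ'⟩ := Stmt19Aux.key hh (half_pos hε)
    refine ⟨δ, hδ, fun x' hx' n => ?_⟩
    have := hδ' x x' (by rwa [dist_comm] at hx') (μs n) (hμs n)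
    rw [Real.dist_eq]
    exact lt_of_le_of_lt this (half_lt_self hε)
  -- pointwise convergence of `H (μs n)` to `H μ`
  have hpt : Tendsto (fun n => H (μs n)) atTop (𝓝 (H μ)) := by
    rw [tendsto_pi_nhds]
    intro x
    exact hconv (fun y => h x y) (hh.comp (continuous_const.prodMk continuous_id))
  -- hence uniform convergence
  have hunif : TendstoUniformly (fun n => H (μs n)) (H μ) atTop := by
    exact UniformFun.tendsto_iff_tendstoUniformly.mp
      ((eqcont.tendsto_uniformFun_iff_pi atTop (H μ)).mpr hpt)
  intro ψ hψ
  -- rewrite the pushforward integrals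
  have hmap : ∀ n, ∫ x, ψ x ∂((μs n).map (fMu f h (μs n))) =
      ∫ x, ψ (fMu f h (μs n) x) ∂(μs n) := fun n =>
    integral_map ((fMucont (μs n) (hμs n)).aemeasurable) hψ.aestronglyMeasurable
  have hmapμ : ∫ x, ψ x ∂(μ.map (fMu f h μ)) =
      ∫ x, ψ (fMu f h μ x) ∂μ :=
    integral_map ((fMucont μ ‹_›).aemeasurable) hψ.aestronglyMeasurable
  simp only [hmap, hmapμ]
  set g : UnitAddCircle → ℝ := fun x => ψ (fMu f h μ x) with hg
  have hgcont : Continuous g := hψ.comp (fMucont μ ‹_›)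
  have hconvg := hconv g hgcont
  rw [Metric.tendsto_atTop] at hconvg ⊢
  intro ε hε
  -- modulus of continuity of ψ
  obtain ⟨δψ, hδψ, hδψ'⟩ := Metric.uniformContinuous_iff.mp
    (CompactSpace.uniformContinuous_of_continuous hψ) (ε / 4) (by linarith)
  obtain ⟨N₁, hN₁⟩ := hconvg (ε / 2) (by linarith)
  have hunif' := (Metric.tendstoUniformly_iff.mp hunif) δψ hδψ
  obtain ⟨N₂, hN₂⟩ := hunif'.exists_forall_of_atTop
  refine ⟨max N₁ N₂, fun n hn => ?_⟩
  have hn₁ : N₁ ≤ n := le_trans (le_max_left _ _) hn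
  have hn₂ : N₂ ≤ n := le_trans (le_max_right _ _) hn
  -- pointwise bound on the integrands
  have hbd : ∀ x, ‖ψ (fMu f h (μs n) x) - g x‖ ≤ ε / 4 := by
    intro x
    have hd : dist (fMu f h (μs n) x) (fMu f h μ x) < δψ := by
      show dist (f x + _) (f x + _) < δψ
      rw [dist_add_left, dist_eq_norm, ← AddCircle.coe_sub]
      refine lt_of_le_of_lt (Stmt19Aux.norm_coe_le _) ?_
      have := hN₂ n hn₂ x
      rwa [Real.dist_eq, abs_sub_comm] at this
    have := hδψ' hd
    rw [Real.dist_eq] at this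
    exact le_of_lt this
  have hint₁ : Integrable (fun x => ψ (fMu f h (μs n) x)) (μs n) :=
    Stmt19Aux.integrable_of_cont (hψ.comp (fMucont (μs n) (hμs n))) (μs n)
  have hint₂ : Integrable g (μs n) := Stmt19Aux.integrable_of_cont hgcont (μs n)
  have key₁ : |(∫ x, ψ (fMu f h (μs n) x) ∂(μs n)) - ∫ x, g x ∂(μs n)| ≤ ε / 4 := by
    rw [← integral_sub hint₁ hint₂]
    calc |∫ x, ψ (fMu f h (μs n) x) - g x ∂(μs n)| ≤ (ε / 4) * ((μs n) Set.univ).toReal :=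
          norm_integral_le_of_norm_le_const (Filter.Eventually.of_forall hbd)
      _ = ε / 4 := by simp [(hμs n).measure_univ]
  have key₂ := hN₁ n hn₁
  calc dist (∫ x, ψ (fMu f h (μs n) x) ∂(μs n)) (∫ x, g x ∂μ)
      ≤ dist (∫ x, ψ (fMu f h (μs n) x) ∂(μs n)) (∫ x, g x ∂(μs n))
        + dist (∫ x, g x ∂(μs n)) (∫ x, g x ∂μ) := dist_triangle _ _ _
    _ ≤ ε / 4 + dist (∫ x, g x ∂(μs n)) (∫ x, g x ∂μ) := by
        rw [Real.dist_eq]; gcongr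
    _ < ε / 4 + ε / 2 := by gcongr
    _ < ε := by linarith
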